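/- Let f : ℝ^n → ℝ be convex and differentiable, X ⊆ ℝ^n convex, and h : ℝ^n → ℝ convex and differentiable with Bregman distance D_h. Suppose f attains its minimum f* on X with nonempty solution set X*, and for each x ∈ X the point x̄ := argmin_{y∈X*} D_h(y,x) exists and is unique. Suppose L > 0 satisfies D_f(y,x) ≤ L·D_h(y,x) for all x,y ∈ X, and μ > 0 satisfies D_f(x̄,x) ≥ μ·D_h(x̄,x) for all x ∈ X. Let x_0 ∈ X and for each k ≥ 0 let x_{k+1} minimize y ↦ ⟨∇f(x_k), y⟩ + L·D_h(y,x_k) over y ∈ X. Then D_h(X*, x_k) ≤ (1 − μ/L)^k·D_h(X*, x_0) for all k ≥ 0, and f(x_k) − f* ≤ L·(1 − μ/L)^k·D_h(X*, x_0) for all k ≥ 1, where D_h(X*, x) := inf_{y∈X*} D_h(y,x). -/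

import Mathlib

noncomputable section
open scoped RealInnerProductSpace
open Set

lemma grad_ineq_aux {E : Type*} [NormedAddCommGroup E] [InnerProductSpace ℝ E]
    {φ : E → ℝ} {G : E →L[ℝ] ℝ} {x y : E}
    (hconv : ConvexOn ℝ Set.univ φ) (hgrad : HasFDerivAt φ G x) :
    φ x + G (y - x) ≤ φ y := by
  have hcomp : ConvexOn ℝ Set.univ (φ ∘ (AffineMap.lineMap x y : ℝ →ᵃ[ℝ] E)) := by
    simpa using hconv.comp_affineMap (AffineMap.lineMap x y : ℝ →ᵃ[ℝ] E)
  have hc : HasDerivAt (fun t : ℝ => (AffineMap.lineMap x y : ℝ →ᵃ[ℝ] E) t) (y - x) 0 := by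
    have heq : (fun t : ℝ => (AffineMap.lineMap x y : ℝ →ᵃ[ℝ] E) t)
        = fun t : ℝ => t • (y - x) + x := by
      funext t
      simp [AffineMap.lineMap_apply_module, sub_smul, smul_sub, one_smul]
      abel
    rw [heq]
    simpa using ((hasDerivAt_id (0:ℝ)).smul_const (y - x)).add_const x
  have hgrad' : HasFDerivAt φ G ((AffineMap.lineMap x y : ℝ →ᵃ[ℝ] E) 0) := by
    simpa using hgrad
  have hd : HasDerivAt (φ ∘ (AffineMap.lineMap x y : ℝ →ᵃ[ℝ] E)) (G (y - x)) 0 :=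
    hgrad'.comp_hasDerivAt 0 hc
  have h01 := hcomp.le_slope_of_hasDerivAt (mem_univ (0:ℝ)) (mem_univ (1:ℝ)) one_pos hd
  rw [slope_def_field] at h01
  simp only [Function.comp_apply, AffineMap.lineMap_apply_zero, AffineMap.lineMap_apply_one,
    sub_zero, div_one] at h01
  linarith

theorem mirror_descent_linear_convergence {n : ℕ}
    (f : EuclideanSpace ℝ (Fin n) → ℝ)
    (f' : EuclideanSpace ℝ (Fin n) → EuclideanSpace ℝ (Fin n))
    (hfconv : ConvexOn ℝ Set.univ f)
    (hfdiff : ∀ x, HasGradientAt f (f' x) x)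
    (X : Set (EuclideanSpace ℝ (Fin n))) (hX : Convex ℝ X)
    (h : EuclideanSpace ℝ (Fin n) → ℝ)
    (h' : EuclideanSpace ℝ (Fin n) → EuclideanSpace ℝ (Fin n))
    (hhconv : ConvexOn ℝ Set.univ h)
    (hhdiff : ∀ x, HasGradientAt h (h' x) x)
    (Dh : EuclideanSpace ℝ (Fin n) → EuclideanSpace ℝ (Fin n) → ℝ)
    (hDh : ∀ y x, Dh y x = h y - h x - ⟪h' x, y - x⟫)
    (fstar : ℝ)
    (hmin : ∃ z ∈ X, f z = fstar ∧ ∀ y ∈ X, fstar ≤ f y)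
    (Xstar : Set (EuclideanSpace ℝ (Fin n)))
    (hXstar : Xstar = {x | x ∈ X ∧ f x = fstar})
    (xbar : EuclideanSpace ℝ (Fin n) → EuclideanSpace ℝ (Fin n))
    (hbar : ∀ x ∈ X, xbar x ∈ Xstar ∧ ∀ y ∈ Xstar, Dh (xbar x) x ≤ Dh y x)
    (hbar_unique : ∀ x ∈ X, ∀ y ∈ Xstar, (∀ z ∈ Xstar, Dh y x ≤ Dh z x) → y = xbar x)
    (L : ℝ) (hL : 0 < L)
    (hsmooth : ∀ x ∈ X, ∀ y ∈ X, f y - f x - ⟪f' x, y - x⟫ ≤ L * Dh y x)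
    (μ : ℝ) (hμ : 0 < μ)
    (hquasi : ∀ x ∈ X, μ * Dh (xbar x) x ≤ f (xbar x) - f x - ⟪f' x, xbar x - x⟫)
    (x : ℕ → EuclideanSpace ℝ (Fin n))
    (hx0 : x 0 ∈ X)
    (hiter : ∀ k : ℕ, x (k + 1) ∈ X ∧ ∀ y ∈ X,
      ⟪f' (x k), x (k + 1)⟫ + L * Dh (x (k + 1)) (x k) ≤ ⟪f' (x k), y⟫ + L * Dh y (x k)) :
    (∀ k : ℕ, sInf {r | ∃ y ∈ Xstar, r = Dh y (x k)}
        ≤ (1 - μ / L) ^ k * sInf {r | ∃ y ∈ Xstar, r = Dh y (x 0)}) ∧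
    (∀ k : ℕ, 1 ≤ k → f (x k) - fstar
        ≤ L * ((1 - μ / L) ^ k * sInf {r | ∃ y ∈ Xstar, r = Dh y (x 0)})) := by
  -- dual map
  set T : EuclideanSpace ℝ (Fin n) → (EuclideanSpace ℝ (Fin n) →L[ℝ] ℝ) :=
    fun v => (InnerProductSpace.toDual ℝ (EuclideanSpace ℝ (Fin n)) v : _) with hT
  have hTapp : ∀ v w : EuclideanSpace ℝ (Fin n), T v w = ⟪v, w⟫ := fun v w =>
    InnerProductSpace.toDual_apply_apply
  have hlin : ∀ v w : EuclideanSpace ℝ (Fin n),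
      HasFDerivAt (fun z : EuclideanSpace ℝ (Fin n) => ⟪v, z⟫) (T v) w := by
    intro v w
    have heq : ⇑(T v) = fun z : EuclideanSpace ℝ (Fin n) => ⟪v, z⟫ :=
      funext fun z => hTapp v z
    rw [← heq]
    exact (T v).hasFDerivAt
  have hgradh : ∀ z, HasFDerivAt h (T (h' z)) z := fun z =>
    hasGradientAt_iff_hasFDerivAt.mp (hhdiff z)
  -- nonnegativity of Dh
  have hDh_nonneg : ∀ y z, 0 ≤ Dh y z := by
    intro y z
    have h1 := grad_ineq_aux (y := y) hhconv (hgradh z)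
    rw [hTapp] at h1
    rw [hDh]; linarith
  -- iterates in X
  have hxk : ∀ k, x k ∈ X := fun k => Nat.rec hx0 (fun k _ => (hiter k).1) k
  have hfstar_le : ∀ y ∈ X, fstar ≤ f y := by
    obtain ⟨z, hz, hz1, hz2⟩ := hmin
    exact hz2
  -- sInf identification
  have hsinf : ∀ k, sInf {r | ∃ y ∈ Xstar, r = Dh y (x k)} = Dh (xbar (x k)) (x k) := by
    intro k
    refine IsLeast.csInf_eq ⟨⟨xbar (x k), (hbar _ (hxk k)).1, rfl⟩, ?_⟩
    rintro r ⟨y, hy, rfl⟩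
    exact (hbar _ (hxk k)).2 y hy
  -- first-order optimality of iterates
  have hopt : ∀ k, ∀ y ∈ X, 0 ≤ ⟪f' (x k), y - x (k+1)⟫
      + L * (⟪h' (x (k+1)), y - x (k+1)⟫ - ⟪h' (x k), y - x (k+1)⟫) := by
    intro k y hy
    have huX : x (k+1) ∈ X := (hiter k).1
    have hminOn : IsMinOn (fun z => ⟪f' (x k), z⟫
        + L * (h z - h (x k) - ⟪h' (x k), z - x k⟫)) X (x (k+1)) := by
      refine isMinOn_iff.mpr fun z hz => ?_
      have := (hiter k).2 z hz
      simp only [hDh] at this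
      exact this
    have hh2 : HasFDerivAt (fun z => h z - h (x k) - ⟪h' (x k), z - x k⟫)
        (T (h' (x (k+1))) - T (h' (x k))) (x (k+1)) := by
      have hs := ((hgradh (x (k+1))).sub_const (h (x k))).sub
        ((hlin (h' (x k)) (x (k+1))).sub_const ⟪h' (x k), x k⟫)
      have heq : (fun z : EuclideanSpace ℝ (Fin n) =>
          h z - h (x k) - (⟪h' (x k), z⟫ - ⟪h' (x k), x k⟫))
          = fun z => h z - h (x k) - ⟪h' (x k), z - x k⟫ := by
        funext z; rw [inner_sub_right]
      rw [← heq]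
      exact hs
    have hF := (hlin (f' (x k)) (x (k+1))).add (hh2.const_mul L)
    have hcone : y - x (k+1) ∈ posTangentConeAt X (x (k+1)) :=
      sub_mem_posTangentConeAt_of_segment_subset (hX.segment_subset huX hy)
    have h0 := (hminOn.localize).hasFDerivWithinAt_nonneg hF.hasFDerivWithinAt hcone
    simp only [ContinuousLinearMap.add_apply, ContinuousLinearMap.smul_apply,
      ContinuousLinearMap.sub_apply, smul_eq_mul, hTapp] at h0
    linarith
  -- three point identity
  have h3pt : ∀ b u p : EuclideanSpace ℝ (Fin n),
      Dh b p = Dh u p + Dh b u + (⟪h' u, b - u⟫ - ⟪h' p, b - u⟫) := by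
    intro b u p
    simp only [hDh, inner_sub_right]
    ring
  -- key inequality
  have key : ∀ k, f (x (k+1)) - fstar
      ≤ (L - μ) * Dh (xbar (x k)) (x k) - L * Dh (xbar (x k)) (x (k+1)) := by
    intro k
    have hpX : x k ∈ X := hxk k
    have huX : x (k+1) ∈ X := (hiter k).1
    have hbstar : xbar (x k) ∈ Xstar := (hbar _ hpX).1
    have hbX : xbar (x k) ∈ X := by rw [hXstar] at hbstar; exact hbstar.1
    have hfb : f (xbar (x k)) = fstar := by rw [hXstar] at hbstar; exact hbstar.2
    have h1 := hsmooth _ hpX _ huX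
    have h2 := hopt k _ hbX
    have h3 := h3pt (xbar (x k)) (x (k+1)) (x k)
    have h3L : L * Dh (xbar (x k)) (x k) = L * Dh (x (k+1)) (x k)
        + L * Dh (xbar (x k)) (x (k+1))
        + L * (⟪h' (x (k+1)), xbar (x k) - x (k+1)⟫ - ⟪h' (x k), xbar (x k) - x (k+1)⟫) := by
      rw [h3]; ring
    have h4 := hquasi _ hpX
    have einner : ⟪f' (x k), x (k+1) - x k⟫ + ⟪f' (x k), xbar (x k) - x (k+1)⟫
        = ⟪f' (x k), xbar (x k) - x k⟫ := by
      simp only [inner_sub_right]; ring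
    linarith
  -- contraction step
  have hstep : ∀ k, Dh (xbar (x (k+1))) (x (k+1)) ≤ (1 - μ/L) * Dh (xbar (x k)) (x k) := by
    intro k
    have h5 : fstar ≤ f (x (k+1)) := hfstar_le _ (hiter k).1
    have h6 := key k
    have h7 : Dh (xbar (x (k+1))) (x (k+1)) ≤ Dh (xbar (x k)) (x (k+1)) :=
      (hbar _ (hxk (k+1))).2 _ (hbar _ (hxk k)).1
    have h8 : L * Dh (xbar (x (k+1))) (x (k+1)) ≤ (L - μ) * Dh (xbar (x k)) (x k) := by
      nlinarith [mul_le_mul_of_nonneg_left h7 hL.le]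
    rw [show (1 - μ/L) = (L - μ)/L by field_simp]
    rw [div_mul_eq_mul_div, le_div_iff₀ hL]
    nlinarith
  have hDpos : ∀ k, 0 ≤ Dh (xbar (x k)) (x k) := fun k => hDh_nonneg _ _
  by_cases hc : 0 ≤ 1 - μ/L
  · have hgeo : ∀ k, Dh (xbar (x k)) (x k) ≤ (1 - μ/L)^k * Dh (xbar (x 0)) (x 0) := by
      intro k
      induction k with
      | zero => simp
      | succ m ih =>
        calc Dh (xbar (x (m+1))) (x (m+1)) ≤ (1 - μ/L) * Dh (xbar (x m)) (x m) := hstep m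
          _ ≤ (1 - μ/L) * ((1 - μ/L)^m * Dh (xbar (x 0)) (x 0)) :=
              mul_le_mul_of_nonneg_left ih hc
          _ = (1 - μ/L)^(m+1) * Dh (xbar (x 0)) (x 0) := by ring
    constructor
    · intro k; rw [hsinf k, hsinf 0]; exact hgeo k
    · intro k hk
      rw [hsinf 0]
      obtain ⟨m, rfl⟩ : ∃ m, k = m + 1 := ⟨k - 1, (Nat.succ_pred_eq_of_pos hk).symm⟩
      have h6 := key m
      have h9 : f (x (m+1)) - fstar ≤ (L - μ) * Dh (xbar (x m)) (x m) := by
        nlinarith [hDh_nonneg (xbar (x m)) (x (m+1))]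
      have h10 : (L - μ) * Dh (xbar (x m)) (x m)
          = L * ((1 - μ/L) * Dh (xbar (x m)) (x m)) := by
        field_simp
      have h11 : (1 - μ/L) * Dh (xbar (x m)) (x m)
          ≤ (1 - μ/L)^(m+1) * Dh (xbar (x 0)) (x 0) := by
        calc (1 - μ/L) * Dh (xbar (x m)) (x m)
            ≤ (1 - μ/L) * ((1 - μ/L)^m * Dh (xbar (x 0)) (x 0)) :=
              mul_le_mul_of_nonneg_left (hgeo m) hc
          _ = (1 - μ/L)^(m+1) * Dh (xbar (x 0)) (x 0) := by ring
      calc f (x (m+1)) - fstar ≤ L * ((1 - μ/L) * Dh (xbar (x m)) (x m)) := by rw [← h10]; exact h9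
        _ ≤ L * ((1 - μ/L)^(m+1) * Dh (xbar (x 0)) (x 0)) :=
            mul_le_mul_of_nonneg_left h11 hL.le
  · push_neg at hc
    have hD0 : Dh (xbar (x 0)) (x 0) = 0 := by
      have h1 := hstep 0
      have h2 := hDpos 1
      have h3 := hDpos 0
      nlinarith
    have hDall : ∀ k, Dh (xbar (x k)) (x k) = 0 := by
      intro k
      induction k with
      | zero => exact hD0
      | succ m ih =>
        have := hstep m
        rw [ih, mul_zero] at this
        exact le_antisymm this (hDpos (m+1))
    constructor
    · intro k; rw [hsinf k, hsinf 0, hDall k, hD0, mul_zero]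
    · intro k hk
      rw [hsinf 0, hD0, mul_zero, mul_zero]
      obtain ⟨m, rfl⟩ : ∃ m, k = m + 1 := ⟨k - 1, (Nat.succ_pred_eq_of_pos hk).symm⟩
      have h6 := key m
      rw [hDall m, mul_zero, zero_sub] at h6
      have := mul_nonneg hL.le (hDh_nonneg (xbar (x m)) (x (m+1)))
      linarith
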